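/- Let w, Δw ∈ ℝ^d with w ≠ 0 and ‖Δw‖ ≤ ‖w‖/2. Then ‖ (w - Δw)/‖w - Δw‖ - w/‖w‖ + (1/‖w‖)(I_d - w wᵀ/‖w‖²) Δw ‖ ≤ 5‖Δw‖²/‖w‖², where (I_d - w wᵀ/‖w‖²) Δw = Δw - (⟨w,Δw⟩/‖w‖²) w. -/

import Mathlib

lemma stmt_9_aux (a b δ c : ℝ) (ha : 0 < a) (hδ0 : 0 ≤ δ) (hδa : δ ≤ a / 2)
    (hab : |a - b| ≤ δ) (hc : c = (a ^ 2 + δ ^ 2 - b ^ 2) / 2) (hcs : |c| ≤ a * δ) :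
    |b⁻¹ - a⁻¹ - c / a ^ 2 * a⁻¹| * b + |c / a ^ 2 * a⁻¹| * δ ≤ 5 * δ ^ 2 / a ^ 2 := by
  have hab' := abs_le.mp hab
  have hb2 : a / 2 ≤ b := by linarith
  have hb0 : 0 < b := lt_of_lt_of_le (by linarith) hb2
  have hb3 : b ≤ 3 / 2 * a := by linarith
  have hsq : (a - b) ^ 2 ≤ δ ^ 2 := by nlinarith [sq_abs (a - b)]
  have h1 : |b⁻¹ - a⁻¹ - c / a ^ 2 * a⁻¹| * b ≤ 5 / 2 * δ ^ 2 / a ^ 2 := by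
    have hkb : (b⁻¹ - a⁻¹ - c / a ^ 2 * a⁻¹) * b
        = ((a - b) ^ 2 * (2 * a + b) - b * δ ^ 2) / (2 * a ^ 3) := by
      rw [hc]; field_simp; ring
    have habs : |b⁻¹ - a⁻¹ - c / a ^ 2 * a⁻¹| * b
        = |(b⁻¹ - a⁻¹ - c / a ^ 2 * a⁻¹) * b| := by
      rw [abs_mul, abs_of_pos hb0]
    have hnum : |(a - b) ^ 2 * (2 * a + b) - b * δ ^ 2| ≤ 5 * a * δ ^ 2 := by
      rw [abs_le]
      constructor <;> nlinarith
    rw [habs, hkb, abs_div, abs_of_pos (by positivity : (0:ℝ) < 2 * a ^ 3)]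
    calc |(a - b) ^ 2 * (2 * a + b) - b * δ ^ 2| / (2 * a ^ 3)
        ≤ (5 * a * δ ^ 2) / (2 * a ^ 3) := by gcongr
      _ = 5 / 2 * δ ^ 2 / a ^ 2 := by field_simp
  have h2 : |c / a ^ 2 * a⁻¹| * δ ≤ δ ^ 2 / a ^ 2 := by
    have hk : |c / a ^ 2 * a⁻¹| ≤ δ / a ^ 2 := by
      rw [abs_mul, abs_div, abs_inv, abs_of_pos ha,
        abs_of_pos (by positivity : (0:ℝ) < a ^ 2)]
      calc |c| / a ^ 2 * a⁻¹ ≤ (a * δ) / a ^ 2 * a⁻¹ := by gcongr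
        _ = δ / a ^ 2 := by field_simp
    calc |c / a ^ 2 * a⁻¹| * δ ≤ (δ / a ^ 2) * δ := by gcongr
      _ = δ ^ 2 / a ^ 2 := by ring
  have hpos : 0 ≤ δ ^ 2 / a ^ 2 := by positivity
  have heq : 5 / 2 * δ ^ 2 / a ^ 2 = 5 / 2 * (δ ^ 2 / a ^ 2) := by ring
  have heq2 : 5 * δ ^ 2 / a ^ 2 = 5 * (δ ^ 2 / a ^ 2) := by ring
  linarith

theorem stmt_9 (d : ℕ) (w Δw : EuclideanSpace ℝ (Fin d))
    (hw : w ≠ 0) (hΔ : ‖Δw‖ ≤ ‖w‖ / 2) :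
    ‖‖w - Δw‖⁻¹ • (w - Δw) - ‖w‖⁻¹ • w
        + ‖w‖⁻¹ • (Δw - ((inner ℝ w Δw : ℝ) / ‖w‖ ^ 2) • w)‖ ≤
      5 * ‖Δw‖ ^ 2 / ‖w‖ ^ 2 := by
  have ha : 0 < ‖w‖ := norm_pos_iff.mpr hw
  have hab : |‖w‖ - ‖w - Δw‖| ≤ ‖Δw‖ := by
    have := abs_norm_sub_norm_le w (w - Δw)
    simpa using this
  have hc : (inner ℝ w Δw : ℝ) = (‖w‖ ^ 2 + ‖Δw‖ ^ 2 - ‖w - Δw‖ ^ 2) / 2 := by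
    have h := @norm_sub_sq_real (EuclideanSpace ℝ (Fin d)) _ _ w Δw
    linarith
  have hcs : |(inner ℝ w Δw : ℝ)| ≤ ‖w‖ * ‖Δw‖ := abs_real_inner_le_norm w Δw
  have hE : ‖w - Δw‖⁻¹ • (w - Δw) - ‖w‖⁻¹ • w
        + ‖w‖⁻¹ • (Δw - ((inner ℝ w Δw : ℝ) / ‖w‖ ^ 2) • w)
      = (‖w - Δw‖⁻¹ - ‖w‖⁻¹ - (inner ℝ w Δw : ℝ) / ‖w‖ ^ 2 * ‖w‖⁻¹) • (w - Δw)
        - ((inner ℝ w Δw : ℝ) / ‖w‖ ^ 2 * ‖w‖⁻¹) • Δw := by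
    module
  rw [hE]
  calc ‖(‖w - Δw‖⁻¹ - ‖w‖⁻¹ - (inner ℝ w Δw : ℝ) / ‖w‖ ^ 2 * ‖w‖⁻¹) • (w - Δw)
        - ((inner ℝ w Δw : ℝ) / ‖w‖ ^ 2 * ‖w‖⁻¹) • Δw‖
      ≤ ‖(‖w - Δw‖⁻¹ - ‖w‖⁻¹ - (inner ℝ w Δw : ℝ) / ‖w‖ ^ 2 * ‖w‖⁻¹) • (w - Δw)‖
        + ‖((inner ℝ w Δw : ℝ) / ‖w‖ ^ 2 * ‖w‖⁻¹) • Δw‖ := norm_sub_le _ _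
    _ = |‖w - Δw‖⁻¹ - ‖w‖⁻¹ - (inner ℝ w Δw : ℝ) / ‖w‖ ^ 2 * ‖w‖⁻¹| * ‖w - Δw‖
        + |(inner ℝ w Δw : ℝ) / ‖w‖ ^ 2 * ‖w‖⁻¹| * ‖Δw‖ := by
        rw [norm_smul, norm_smul, Real.norm_eq_abs, Real.norm_eq_abs]
    _ ≤ 5 * ‖Δw‖ ^ 2 / ‖w‖ ^ 2 :=
        stmt_9_aux ‖w‖ ‖w - Δw‖ ‖Δw‖ _ ha (norm_nonneg _) hΔ hab hc hcs
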